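/- A loop with self-map σ is a σ-M-loop if and only if it is a σ-generalized right Bol loop satisfying the left inverse property. -/
import Mathlib


/-- A loop: a magma with two-sided identity whose translations are bijections. -/
structure IsLoop (Q : Type*) [Mul Q] [One Q] : Prop where
  one_mul : ∀ x : Q, 1 * x = x
  mul_one : ∀ x : Q, x * 1 = x
  lbij : ∀ x : Q, Function.Bijective (fun y : Q => x * y)
  rbij : ∀ x : Q, Function.Bijective (fun y : Q => y * x)

/-- Left translation `L x : y ↦ x * y` as a permutation. -/
noncomputable def Lt {Q : Type*} [Mul Q] [One Q] (h : IsLoop Q) (x : Q) : Equiv.Perm Q :=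
  Equiv.ofBijective _ (h.lbij x)

/-- Right translation `R x : y ↦ y * x` as a permutation. -/
noncomputable def Rt {Q : Type*} [Mul Q] [One Q] (h : IsLoop Q) (x : Q) : Equiv.Perm Q :=
  Equiv.ofBijective _ (h.rbij x)

/-- The right inverse `x^ρ`, the unique solution of `x * x^ρ = 1`. -/
noncomputable def rinv {Q : Type*} [Mul Q] [One Q] (h : IsLoop Q) (x : Q) : Q :=
  (Lt h x).symm 1

/-- The left inverse `x^λ`, the unique solution of `x^λ * x = 1`. -/
noncomputable def linv {Q : Type*} [Mul Q] [One Q] (h : IsLoop Q) (x : Q) : Q :=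
  (Rt h x).symm 1

/-- σ-generalized (right) Bol identity. -/
def RightBol {Q : Type*} [Mul Q] (σ : Q → Q) : Prop :=
  ∀ x y z : Q, ((x * y) * z) * σ y = x * ((y * z) * σ y)

/-- σ-generalized left Bol identity. -/
def LeftBol {Q : Type*} [Mul Q] (σ : Q → Q) : Prop :=
  ∀ x y z : Q, σ y * (z * (y * x)) = (σ y * (z * y)) * x

/-- `(A,B,C)` is an autotopism: `A x * B y = C (x * y)`. -/
def Autotopism {Q : Type*} [Mul Q] (A B C : Equiv.Perm Q) : Prop :=
  ∀ x y : Q, A x * B y = C (x * y)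

namespace Stmt9Aux

variable {Q : Type*} [Mul Q] [One Q]

theorem lcan (h : IsLoop Q) {x a b : Q} (e : x * a = x * b) : a = b :=
  (h.lbij x).injective e

theorem rcan (h : IsLoop Q) {x a b : Q} (e : a * x = b * x) : a = b :=
  (h.rbij x).injective e

theorem linv_mul (h : IsLoop Q) (x : Q) : linv h x * x = 1 :=
  (Rt h x).apply_symm_apply 1

theorem mul_rinv (h : IsLoop Q) (x : Q) : x * rinv h x = 1 :=
  (Lt h x).apply_symm_apply 1

section LIP

variable (h : IsLoop Q) (lip : ∀ x y : Q, linv h x * (x * y) = y)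
include lip

/-- In a LIP loop, `x * (x^λ * w) = w`. -/
theorem Lcan : ∀ x w : Q, x * (linv h x * w) = w := by
  intro x w
  obtain ⟨y, rfl⟩ : ∃ y, x * y = w := (h.lbij x).surjective w
  rw [lip]

theorem mul_linv : ∀ x : Q, x * linv h x = 1 := by
  intro x
  have := Lcan h lip x 1
  rwa [h.mul_one (linv h x)] at this

theorem linv_linv : ∀ x : Q, linv h (linv h x) = x := by
  intro x
  apply rcan h (x := linv h x)
  rw [linv_mul h (linv h x), mul_linv h lip x]

theorem linv_inj : ∀ {a b : Q}, linv h a = linv h b → a = b := by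
  intro a b e
  have := congrArg (linv h) e
  rwa [linv_linv h lip, linv_linv h lip] at this

/-- Key lemma: from an autotopism-like triple `(A,B,C)` we get the
"Ω∘Λ∘Ω-conjugated" triple `(λ∘A∘λ, C, B)`. -/
theorem KL (A B C : Q → Q) (hA : ∀ a b : Q, A a * B b = C (a * b)) :
    ∀ a b : Q, linv h (A (linv h a)) * C b = B (a * b) := by
  intro a b
  have h1 : C b = A (linv h a) * B (a * b) := by
    rw [hA (linv h a) (a * b), lip]
  rw [h1, lip]

/-- Right inverse property, from AIP + LIP. -/
theorem rip (aip : ∀ x y : Q, linv h (x * y) = linv h y * linv h x) :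
    ∀ a x : Q, (a * x) * linv h x = a := by
  intro a x
  apply linv_inj h lip
  rw [aip (a * x) (linv h x), aip a x, linv_linv h lip, Lcan h lip]

end LIP

end Stmt9Aux

open Stmt9Aux in
/-- A loop is a σ-M-loop iff it is a σ-generalized right Bol loop with the
left inverse property. -/
theorem stmt9 {Q : Type*} [Mul Q] [One Q] (h : IsLoop Q) (σ : Q → Q) :
    (∀ x y z : Q, (x * y) * (z * σ x) = (x * (y * z)) * σ x) ↔
      (RightBol σ ∧ ∀ x y : Q, linv h x * (x * y) = y) := by
  constructor
  · -- M-loop ⇒ right Bol + LIP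
    intro M
    -- first derive LIP
    have hL : ∀ x z : Q, x * (rinv h x * z) = z := by
      intro x z
      apply rcan h (x := σ x)
      have := M x (rinv h x) z
      rw [mul_rinv h x, h.one_mul (z * σ x)] at this
      exact this.symm
    have hL' : ∀ x z : Q, rinv h x * (x * z) = z := by
      intro x z
      apply lcan h (x := x)
      rw [hL x (x * z)]
    have hri : ∀ x : Q, rinv h x * x = 1 := by
      intro x
      have := hL' x 1
      rwa [h.mul_one x] at this
    have lip : ∀ x y : Q, linv h x * (x * y) = y := by
      intro x y
      have e : linv h x = rinv h x := rcan h (x := x) (by rw [linv_mul h x, hri x])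
      rw [e]; exact hL' x y
    refine ⟨?_, lip⟩
    -- AIP
    have aip : ∀ x y : Q, linv h (x * y) = linv h y * linv h x := by
      intro x y
      apply rcan h (x := σ x)
      apply lcan h (x := x * y)
      have e1 : (x * y) * ((linv h y * linv h x) * σ x) = σ x := by
        have := M x y (linv h y * linv h x)
        rwa [Lcan h lip y (linv h x), mul_linv h lip x, h.one_mul (σ x)] at this
      rw [e1, Lcan h lip (x * y) (σ x)]
    -- apply the key lemma to the M-triple at base y
    intro x y z
    have key := KL h lip (fun a => y * a) (fun b => b * σ y) (fun c => (y * c) * σ y)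
      (fun a b => M y a b) (x * y) z
    have e2 : linv h (y * linv h (x * y)) = x := by
      rw [aip y (linv h (x * y)), linv_linv h lip (x * y)]
      exact rip h lip aip x y
    rw [e2] at key
    exact key.symm
  · -- right Bol + LIP ⇒ M-loop
    rintro ⟨RB, lip⟩
    -- AIP
    have aip : ∀ x y : Q, linv h (x * y) = linv h y * linv h x := by
      intro x y
      apply lcan h (x := x * y)
      apply rcan h (x := σ y)
      have e1 : ((x * y) * (linv h y * linv h x)) * σ y = σ y := by
        have := RB x y (linv h y * linv h x)
        rwa [Lcan h lip y (linv h x), Lcan h lip x (σ y)] at this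
      rw [e1, mul_linv h lip (x * y), h.one_mul (σ y)]
    have rip' : ∀ (a x : Q), (a * linv h x) * x = a := by
      intro a x
      have := rip h lip aip a (linv h x)
      rwa [linv_linv h lip x] at this
    -- the A-triple identity (right Bol with first factor shifted)
    have Aid : ∀ y a b : Q, (a * linv h y) * ((y * b) * σ y) = (a * b) * σ y := by
      intro y a b
      have := RB (a * linv h y) y b
      rw [rip' a y] at this
      exact this.symm
    -- apply the key lemma to the A-triple at base x
    intro x y z
    have key := KL h lip (fun a => a * linv h x) (fun b => (x * b) * σ x) (fun c => c * σ x)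
      (fun a b => Aid x a b) y z
    have e2 : linv h (linv h y * linv h x) = x * y := by
      rw [← aip x y, linv_linv h lip]
    rwa [e2] at key
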